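/- arXiv:1207.5518 — 2 statements merged into one kernel-verified Lean document; each statement's English description precedes it below -/
import Mathlib

section
/- Let q ∈ [0,1], let B be a binomial-type sum of N = k'·T independent Bernoulli(q) trials and let G = k' + (a binomial sum of k independent Bernoulli(q) trials), where k > k'·T. Then for all x ≤ 1, with probability at least 1 − 4·exp(−2x²·k'·T), one has B ≤ (2x + k'/k)·T·G. -/
open MeasureTheory ProbabilityTheory Real

lemma bern_mgf_le {q : ℝ} (hq0 : 0 ≤ q) (hq1 : q ≤ 1) (t : ℝ) :
    1 - q + q * exp t ≤ exp (q * t + t ^ 2 / 8) := by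
  set g : ℝ → ℝ := fun s => 1 - q + q * exp s with hg
  have hgpos : ∀ s, 0 < g s := by
    intro s
    rcases lt_or_eq_of_le hq1 with h | h
    · have : 0 ≤ q * exp s := mul_nonneg hq0 (exp_pos s).le
      simp only [hg]; linarith
    · subst h; simp only [hg]; have := exp_pos s; linarith
  have hgd : ∀ s, HasDerivAt g (q * exp s) s := by
    intro s
    exact ((Real.hasDerivAt_exp s).const_mul q).const_add (1 - q)
  set h : ℝ → ℝ := fun s => Real.log (g s) - q * s - s ^ 2 / 8 with hh
  set h' : ℝ → ℝ := fun s => q * exp s / g s - q - s / 4 with hh'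
  have hhd : ∀ s, HasDerivAt h (h' s) s := by
    intro s
    have h1 : HasDerivAt (fun s => Real.log (g s)) (q * exp s / g s) s :=
      (hgd s).log (hgpos s).ne'
    have h2 : HasDerivAt (fun s : ℝ => q * s) q s := by
      simpa using (hasDerivAt_id s).const_mul q
    have h3 : HasDerivAt (fun s : ℝ => s ^ 2 / 8) (s / 4) s := by
      have := (hasDerivAt_pow 2 s).div_const 8
      have h4 : (2 : ℕ) * s ^ (2 - 1) / 8 = s / 4 := by ring
      rw [h4] at this
      exact this
    exact (h1.sub h2).sub h3
  have hh'd : ∀ s, HasDerivAt h'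
      ((q * exp s * g s - (q * exp s) * (q * exp s)) / (g s) ^ 2 - 1 / 4) s := by
    intro s
    have h1 : HasDerivAt (fun s => q * exp s) (q * exp s) s :=
      (Real.hasDerivAt_exp s).const_mul q
    have h2 : HasDerivAt (fun s => q * exp s / g s)
        ((q * exp s * g s - (q * exp s) * (q * exp s)) / (g s) ^ 2) s :=
      h1.div (hgd s) (hgpos s).ne'
    have h3 : HasDerivAt (fun s : ℝ => s / 4) (1 / 4) s := by
      simpa using (hasDerivAt_id s).div_const 4
    have h4 : HasDerivAt (fun s : ℝ => q) 0 s := hasDerivAt_const s q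
    have := (h2.sub h4).sub h3
    rw [sub_zero] at this
    exact this
  have hderiv_nonpos : ∀ s,
      (q * exp s * g s - (q * exp s) * (q * exp s)) / (g s) ^ 2 - 1 / 4 ≤ 0 := by
    intro s
    set p : ℝ := q * exp s / g s with hp
    have hgs := hgpos s
    have key : (q * exp s * g s - (q * exp s) * (q * exp s)) / (g s) ^ 2 = p - p ^ 2 := by
      rw [hp]
      field_simp
    rw [key]
    nlinarith [sq_nonneg (p - 1 / 2)]
  have hanti : Antitone h' := by
    refine antitone_of_deriv_nonpos (fun s => (hh'd s).differentiableAt) (fun s => ?_)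
    rw [(hh'd s).deriv]; exact hderiv_nonpos s
  have hg0 : g 0 = 1 := by simp [hg]
  have hh'0 : h' 0 = 0 := by simp [hh', hg0]
  have hh0 : h 0 = 0 := by simp [hh, hg0]
  have hdiff : Differentiable ℝ h := fun s => (hhd s).differentiableAt
  have hht : h t ≤ 0 := by
    rcases le_total 0 t with ht | ht
    · have hA : AntitoneOn h (Set.Ici (0 : ℝ)) := by
        refine antitoneOn_of_deriv_nonpos (convex_Ici 0)
          hdiff.continuous.continuousOn hdiff.differentiableOn (fun s hs => ?_)
        rw [interior_Ici] at hs
        rw [(hhd s).deriv]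
        calc h' s ≤ h' 0 := hanti (le_of_lt hs)
        _ = 0 := hh'0
      have := hA (Set.self_mem_Ici) (Set.mem_Ici.mpr ht) ht
      rwa [hh0] at this
    · have hA : MonotoneOn h (Set.Iic (0 : ℝ)) := by
        refine monotoneOn_of_deriv_nonneg (convex_Iic 0)
          hdiff.continuous.continuousOn hdiff.differentiableOn (fun s hs => ?_)
        rw [interior_Iic] at hs
        rw [(hhd s).deriv]
        calc (0:ℝ) = h' 0 := hh'0.symm
        _ ≤ h' s := hanti (le_of_lt hs)
      have := hA (Set.mem_Iic.mpr ht) (Set.self_mem_Iic) ht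
      rwa [hh0] at this
  have hlog : Real.log (g t) ≤ q * t + t ^ 2 / 8 := by
    simp only [hh] at hht; linarith
  calc g t = exp (Real.log (g t)) := (Real.exp_log (hgpos t)).symm
  _ ≤ exp (q * t + t ^ 2 / 8) := exp_le_exp.mpr hlog

lemma bern_eq_indicator {Ω : Type*} {X : Ω → ℝ} (hBern : ∀ ω, X ω = 0 ∨ X ω = 1) :
    X = Set.indicator {ω | X ω = 1} (fun _ => (1 : ℝ)) := by
  funext ω
  rcases hBern ω with h | h
  · rw [h, Set.indicator_of_notMem]
    simp [Set.mem_setOf_eq, h]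
  · rw [h, Set.indicator_of_mem]
    exact h

lemma bern_exp_eq {Ω : Type*} {X : Ω → ℝ} (hBern : ∀ ω, X ω = 0 ∨ X ω = 1) (t : ℝ) (ω : Ω) :
    Real.exp (t * X ω) = 1 + (Real.exp t - 1) * X ω := by
  rcases hBern ω with h | h <;> simp [h]

lemma bern_integrable {Ω : Type*} [MeasureSpace Ω] [IsProbabilityMeasure (ℙ : Measure Ω)]
    {X : Ω → ℝ} (hmeas : Measurable X) (hBern : ∀ ω, X ω = 0 ∨ X ω = 1) :
    Integrable X ℙ := by
  rw [bern_eq_indicator hBern]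
  exact (integrable_const (1 : ℝ)).indicator (hmeas (measurableSet_singleton 1))

lemma bern_exp_integrable {Ω : Type*} [MeasureSpace Ω] [IsProbabilityMeasure (ℙ : Measure Ω)]
    {X : Ω → ℝ} (hmeas : Measurable X) (hBern : ∀ ω, X ω = 0 ∨ X ω = 1) (t : ℝ) :
    Integrable (fun ω => Real.exp (t * X ω)) ℙ := by
  have : (fun ω => Real.exp (t * X ω)) = fun ω => 1 + (Real.exp t - 1) * X ω := by
    funext ω; exact bern_exp_eq hBern t ω
  rw [this]
  exact (integrable_const 1).add ((bern_integrable hmeas hBern).const_mul _)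

lemma bern_integral {Ω : Type*} [MeasureSpace Ω] [IsProbabilityMeasure (ℙ : Measure Ω)]
    {X : Ω → ℝ} {q : ℝ} (hq0 : 0 ≤ q) (hmeas : Measurable X)
    (hBern : ∀ ω, X ω = 0 ∨ X ω = 1) (hp : ℙ {ω | X ω = 1} = ENNReal.ofReal q) :
    ∫ ω, X ω ∂ℙ = q := by
  conv_lhs => rw [bern_eq_indicator hBern]
  rw [integral_indicator_const (1 : ℝ) (show MeasurableSet {ω | X ω = 1} from hmeas (measurableSet_singleton 1)), measureReal_def, hp,
    ENNReal.toReal_ofReal hq0]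
  simp

lemma bern_mgf {Ω : Type*} [MeasureSpace Ω] [IsProbabilityMeasure (ℙ : Measure Ω)]
    {X : Ω → ℝ} {q : ℝ} (hq0 : 0 ≤ q) (hmeas : Measurable X)
    (hBern : ∀ ω, X ω = 0 ∨ X ω = 1) (hp : ℙ {ω | X ω = 1} = ENNReal.ofReal q) (t : ℝ) :
    mgf X ℙ t = 1 - q + q * Real.exp t := by
  have h1 : mgf X ℙ t = ∫ ω, (1 + (Real.exp t - 1) * X ω) ∂ℙ := by
    unfold mgf
    exact integral_congr_ae (Filter.Eventually.of_forall (bern_exp_eq hBern t))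
  rw [h1, integral_add (integrable_const 1) ((bern_integrable hmeas hBern).const_mul _),
    integral_const_mul, bern_integral hq0 hmeas hBern hp]
  simp; ring



lemma det_ineq (q x K K' Tr S B : ℝ) (hx0 : 0 < x) (hK : 0 < K)
    (hK' : 0 < K') (hTr : 0 < Tr) (hs0 : 0 ≤ S)
    (h1 : B ≤ (q + x) * (K' * Tr)) (h2 : (q - x) * K ≤ S) :
    B ≤ (2 * x + K' / K) * Tr * (K' + S) := by
  have goal_eq : (2 * x + K' / K) * Tr * (K' + S)
      = (2 * x * K + K') * Tr * (K' + S) / K := by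
    field_simp
  rw [goal_eq, le_div_iff₀ hK]
  have hc0 : (0 : ℝ) ≤ (2 * x * K + K') * Tr := by positivity
  have step1 : B * K ≤ (q + x) * K' * Tr * K :=
    mul_le_mul_of_nonneg_right (by linarith) hK.le
  have hB2 : 0 ≤ Tr * (K' * K') := by positivity
  rcases le_total q x with hqx | hqx
  · have hS2 : 0 ≤ (2 * x * K + K') * Tr * S := mul_nonneg hc0 hs0
    have mid : 2 * x * K' * Tr * K ≤ (2 * x * K + K') * Tr * (K' + S) := by
      nlinarith [hB2, hS2]
    have hqq : 0 ≤ (x - q) * (K' * (Tr * K)) :=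
      mul_nonneg (by linarith) (by positivity)
    nlinarith [step1, mid, hqq]
  · have step2 : (2 * x * K + K') * Tr * (K' + (q - x) * K)
        ≤ (2 * x * K + K') * Tr * (K' + S) :=
      mul_le_mul_of_nonneg_left (by linarith) hc0
    have hA : 0 ≤ Tr * (2 * x * ((q - x) * (K * K))) :=
      mul_nonneg hTr.le (mul_nonneg (by linarith)
        (mul_nonneg (sub_nonneg.mpr hqx) (mul_nonneg hK.le hK.le)))
    have mid : (q + x) * K' * Tr * K
        ≤ (2 * x * K + K') * Tr * (K' + (q - x) * K) := by
      nlinarith [hA, hB2]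
    linarith [step1, step2, mid]

/-- Let `q ∈ [0,1]`, let `B` be the sum of `N = k'·T` independent Bernoulli(q) indicators
and `G = k' + (sum of k independent Bernoulli(q) indicators)`, all jointly independent,
where `k > k'·T`. Then for all `0 < x ≤ 1`, with probability at least
`1 − 4·exp(−2 x² k' T)`, one has `B ≤ (2x + k'/k)·T·G`. -/
theorem stmt6 {Ω : Type*} [MeasureSpace Ω] [IsProbabilityMeasure (ℙ : Measure Ω)]
    (k' T k : ℕ) (hk' : 0 < k') (hT : 0 < T) (hk : k' * T < k)
    (q : ℝ) (hq : q ∈ Set.Icc (0 : ℝ) 1)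
    (Z : (Fin (k' * T) ⊕ Fin k) → Ω → ℝ)
    (hmeas : ∀ i, Measurable (Z i))
    (hindep : iIndepFun Z ℙ)
    (hBern : ∀ i ω, Z i ω = 0 ∨ Z i ω = 1)
    (hprob : ∀ i, ℙ {ω | Z i ω = 1} = ENNReal.ofReal q)
    (x : ℝ) (hx0 : 0 < x) (hx1 : x ≤ 1) :
    ℙ {ω | ∑ i : Fin (k' * T), Z (Sum.inl i) ω
            ≤ (2 * x + (k' : ℝ) / k) * T * ((k' : ℝ) + ∑ j : Fin k, Z (Sum.inr j) ω)}
      ≥ 1 - ENNReal.ofReal (4 * Real.exp (-2 * x ^ 2 * (k' * T : ℕ))) := by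
  obtain ⟨hq0, hq1⟩ := hq
  set B : Ω → ℝ := fun ω => ∑ i : Fin (k' * T), Z (Sum.inl i) ω with hB
  set S : Ω → ℝ := fun ω => ∑ j : Fin k, Z (Sum.inr j) ω with hS
  have hsetgoal : {ω | ∑ i : Fin (k' * T), Z (Sum.inl i) ω
        ≤ (2 * x + (k' : ℝ) / k) * T * ((k' : ℝ) + ∑ j : Fin k, Z (Sum.inr j) ω)}
      = {ω | B ω ≤ (2 * x + (k' : ℝ) / k) * T * ((k' : ℝ) + S ω)} := rfl
  rw [hsetgoal]
  have hmB : Measurable B := Finset.measurable_sum _ (fun i _ => hmeas (Sum.inl i))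
  have hmS : Measurable S := Finset.measurable_sum _ (fun j _ => hmeas (Sum.inr j))
  -- finsets of indices
  set sB : Finset (Fin (k' * T) ⊕ Fin k) :=
    Finset.univ.map ⟨Sum.inl, Sum.inl_injective⟩ with hsB
  set sS : Finset (Fin (k' * T) ⊕ Fin k) :=
    Finset.univ.map ⟨Sum.inr, Sum.inr_injective⟩ with hsS
  have hBsum : B = ∑ i ∈ sB, Z i := by
    funext ω
    rw [Finset.sum_apply, hsB, Finset.sum_map]
    rfl
  have hSsum : S = ∑ i ∈ sS, Z i := by
    funext ω
    rw [Finset.sum_apply, hsS, Finset.sum_map]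
    rfl
  -- integrability
  have hintB : ∀ t : ℝ, Integrable (fun ω => Real.exp (t * B ω)) ℙ := by
    intro t
    rw [hBsum]
    exact hindep.integrable_exp_mul_sum hmeas (fun i _ => bern_exp_integrable (hmeas i) (hBern i) t)
  have hintS : ∀ t : ℝ, Integrable (fun ω => Real.exp (t * S ω)) ℙ := by
    intro t
    rw [hSsum]
    exact hindep.integrable_exp_mul_sum hmeas (fun i _ => bern_exp_integrable (hmeas i) (hBern i) t)
  -- mgf computation and bound
  have hbase : ∀ t : ℝ, 0 ≤ 1 - q + q * Real.exp t := by
    intro t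
    have := exp_pos t
    nlinarith
  have hmgfB : ∀ t : ℝ, mgf B ℙ t ≤ Real.exp ((q * t + t ^ 2 / 8) * (k' * T : ℕ)) := by
    intro t
    rw [hBsum, hindep.mgf_sum hmeas sB]
    calc ∏ i ∈ sB, mgf (Z i) ℙ t
        = ∏ i ∈ sB, (1 - q + q * Real.exp t) := by
          refine Finset.prod_congr rfl fun i _ => bern_mgf hq0 (hmeas i) (hBern i) (hprob i) t
      _ = (1 - q + q * Real.exp t) ^ (k' * T) := by
          rw [Finset.prod_const, hsB, Finset.card_map, Finset.card_univ, Fintype.card_fin]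
      _ ≤ Real.exp (q * t + t ^ 2 / 8) ^ (k' * T) := by
          exact pow_le_pow_left₀ (hbase t) (bern_mgf_le hq0 hq1 t) _
      _ = Real.exp ((q * t + t ^ 2 / 8) * (k' * T : ℕ)) := by
          rw [← Real.exp_nat_mul]; ring_nf
  have hmgfS : ∀ t : ℝ, mgf S ℙ t ≤ Real.exp ((q * t + t ^ 2 / 8) * k) := by
    intro t
    rw [hSsum, hindep.mgf_sum hmeas sS]
    calc ∏ i ∈ sS, mgf (Z i) ℙ t
        = ∏ i ∈ sS, (1 - q + q * Real.exp t) := by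
          refine Finset.prod_congr rfl fun i _ => bern_mgf hq0 (hmeas i) (hBern i) (hprob i) t
      _ = (1 - q + q * Real.exp t) ^ k := by
          rw [Finset.prod_const, hsS, Finset.card_map, Finset.card_univ, Fintype.card_fin]
      _ ≤ Real.exp (q * t + t ^ 2 / 8) ^ k := by
          exact pow_le_pow_left₀ (hbase t) (bern_mgf_le hq0 hq1 t) _
      _ = Real.exp ((q * t + t ^ 2 / 8) * k) := by
          rw [← Real.exp_nat_mul]; ring_nf
  -- Chernoff tails
  have tail1 : (ℙ {ω | (q + x) * (k' * T : ℕ) ≤ B ω}).toReal ≤ Real.exp (-2 * x ^ 2 * (k' * T : ℕ)) := by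
    have h := measure_ge_le_exp_mul_mgf (X := B) (μ := ℙ) (t := 4 * x)
      ((q + x) * (k' * T : ℕ)) (by positivity) (hintB _)
    refine h.trans ?_
    calc Real.exp (-(4 * x) * ((q + x) * (k' * T : ℕ))) * mgf B ℙ (4 * x)
        ≤ Real.exp (-(4 * x) * ((q + x) * (k' * T : ℕ))) * Real.exp ((q * (4 * x) + (4 * x) ^ 2 / 8) * (k' * T : ℕ)) :=
          mul_le_mul_of_nonneg_left (hmgfB (4 * x)) (exp_pos _).le
      _ = Real.exp (-2 * x ^ 2 * (k' * T : ℕ)) := by rw [← Real.exp_add]; congr 1; ring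
  have tail2 : (ℙ {ω | S ω ≤ (q - x) * k}).toReal ≤ Real.exp (-2 * x ^ 2 * (k' * T : ℕ)) := by
    have h := measure_le_le_exp_mul_mgf (X := S) (μ := ℙ) (t := -(4 * x))
      ((q - x) * k) (by nlinarith) (hintS _)
    refine h.trans ?_
    calc Real.exp (-(-(4 * x)) * ((q - x) * k)) * mgf S ℙ (-(4 * x))
        ≤ Real.exp (-(-(4 * x)) * ((q - x) * k)) *
            Real.exp ((q * (-(4 * x)) + (-(4 * x)) ^ 2 / 8) * k) :=
          mul_le_mul_of_nonneg_left (hmgfS _) (exp_pos _).le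
      _ = Real.exp (-2 * x ^ 2 * k) := by rw [← Real.exp_add]; congr 1; ring
      _ ≤ Real.exp (-2 * x ^ 2 * (k' * T : ℕ)) := by
          apply exp_le_exp.mpr
          have hNk : ((k' * T : ℕ) : ℝ) ≤ (k : ℝ) := Nat.cast_le.mpr hk.le
          nlinarith
  -- deterministic part
  have hS0 : ∀ ω, 0 ≤ S ω := by
    intro ω
    refine Finset.sum_nonneg fun j _ => ?_
    rcases hBern (Sum.inr j) ω with h | h <;> rw [h] <;> norm_num
  have hdet : ∀ ω, B ω < (q + x) * (k' * T : ℕ) → (q - x) * k < S ω →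
      B ω ≤ (2 * x + (k' : ℝ) / k) * T * ((k' : ℝ) + S ω) := by
    intro ω h1 h2
    have hk0 : 0 < k := lt_of_le_of_lt (Nat.zero_le _) hk
    have hK : (0 : ℝ) < k := by exact_mod_cast hk0
    have hK' : (0 : ℝ) < k' := by exact_mod_cast hk'
    have hTr : (0 : ℝ) < T := by exact_mod_cast hT
    have hNc : ((k' * T : ℕ) : ℝ) = (k' : ℝ) * T := by push_cast; ring
    rw [hNc] at h1
    exact det_ineq q x k k' T (S ω) (B ω) hx0 hK hK' hTr (hS0 ω)
      (by linarith) h2.le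
  -- assemble
  set D1 : Set Ω := {ω | (q + x) * (k' * T : ℕ) ≤ B ω} with hD1
  set D2 : Set Ω := {ω | S ω ≤ (q - x) * k} with hD2
  have hmD1 : MeasurableSet D1 := measurableSet_le measurable_const hmB
  have hmD2 : MeasurableSet D2 := measurableSet_le hmS measurable_const
  have hsub : (D1 ∪ D2)ᶜ ⊆ {ω | B ω ≤ (2 * x + (k' : ℝ) / k) * T * ((k' : ℝ) + S ω)} := by
    intro ω hω
    simp only [Set.mem_compl_iff, Set.mem_union, hD1, hD2, Set.mem_setOf_eq, not_or, not_le] at hω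
    exact hdet ω hω.1 hω.2
  have hbound : ℙ D1 + ℙ D2 ≤ ENNReal.ofReal (4 * Real.exp (-2 * x ^ 2 * (k' * T : ℕ))) := by
    have e1 : ℙ D1 ≤ ENNReal.ofReal (Real.exp (-2 * x ^ 2 * (k' * T : ℕ))) := by
      rw [← ENNReal.ofReal_toReal (measure_ne_top ℙ D1)]
      exact ENNReal.ofReal_le_ofReal tail1
    have e2 : ℙ D2 ≤ ENNReal.ofReal (Real.exp (-2 * x ^ 2 * (k' * T : ℕ))) := by
      rw [← ENNReal.ofReal_toReal (measure_ne_top ℙ D2)]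
      exact ENNReal.ofReal_le_ofReal tail2
    calc ℙ D1 + ℙ D2 ≤ ENNReal.ofReal (Real.exp (-2 * x ^ 2 * (k' * T : ℕ)))
          + ENNReal.ofReal (Real.exp (-2 * x ^ 2 * (k' * T : ℕ))) := add_le_add e1 e2
      _ = ENNReal.ofReal (Real.exp (-2 * x ^ 2 * (k' * T : ℕ)) + Real.exp (-2 * x ^ 2 * (k' * T : ℕ))) :=
          (ENNReal.ofReal_add (exp_pos _).le (exp_pos _).le).symm
      _ ≤ ENNReal.ofReal (4 * Real.exp (-2 * x ^ 2 * (k' * T : ℕ))) := by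
          apply ENNReal.ofReal_le_ofReal
          nlinarith [exp_pos (-2 * x ^ 2 * ((k' * T : ℕ) : ℝ))]
  calc (1 : ENNReal) - ENNReal.ofReal (4 * Real.exp (-2 * x ^ 2 * (k' * T : ℕ)))
      ≤ 1 - (ℙ D1 + ℙ D2) := tsub_le_tsub_left hbound 1
    _ ≤ 1 - ℙ (D1 ∪ D2) := tsub_le_tsub_left (measure_union_le D1 D2) 1
    _ = ℙ ((D1 ∪ D2)ᶜ) := (prob_compl_eq_one_sub (hmD1.union hmD2)).symm
    _ ≤ _ := measure_mono hsub
end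

section
/- Suppose bidders are independent: for each bidder i and all types B ∈ T_i, the conditional distribution D_{−i}(B) over the other bidders' types equals D_{−i}. Then for any second-order weight vector w with coordinates w_{ij}(A,B), defining w'_{ij}(A) = Σ_{B ∈ T_i} w_{ij}(A,B), the weights used by the second-order VCG rule on any profile v, f_{ij}(v) = Σ_{B∈T_i} w_{ij}(v_i,B)·Pr[v_{−i} ← D_{−i}(B)], are proportional (with a common positive factor Pr[v ← D] per profile) to the weights f'_{ij}(v) = w'_{ij}(v_i)/Pr[t_i = v_i] used by the virtual VCG rule with weights w'. Consequently the two rules choose the same maximum-weight allocation on every profile with Pr[v ← D] > 0. -/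
open Finset

/-- For independent bidders, the weights of the second-order VCG rule with weights `w`
are, on every profile of positive probability, a common positive multiple (`Pr[v ← D]`)
of the weights of the virtual VCG rule with weights `w'_{ij}(A) = ∑_B w_{ij}(A,B)`;
consequently the two rules select the same maximum-weight feasible allocations. -/
theorem stmt15 (m n : ℕ) (T : Fin m → Type) [∀ i, Fintype (T i)]
    (Di : ∀ i : Fin m, T i → ℝ)
    (F : Finset (Finset (Fin m × Fin n)))
    (w : ∀ i : Fin m, Fin n → T i → T i → ℝ)
    (v : ∀ i, T i) (hv : ∀ i, 0 < Di i (v i)) :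
    (∀ (i : Fin m) (j : Fin n),
        (∑ B : T i, w i j (v i) B * ∏ i' ∈ univ.erase i, Di i' (v i')) =
          (∏ i', Di i' (v i')) *
            ((∑ B : T i, w i j (v i) B) / Di i (v i))) ∧
      ∀ S ∈ F,
        ((∀ S' ∈ F,
            (∑ ij ∈ S', ∑ B : T ij.1, w ij.1 ij.2 (v ij.1) B *
                ∏ i' ∈ univ.erase ij.1, Di i' (v i')) ≤
              ∑ ij ∈ S, ∑ B : T ij.1, w ij.1 ij.2 (v ij.1) B *
                ∏ i' ∈ univ.erase ij.1, Di i' (v i')) ↔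
          (∀ S' ∈ F,
            (∑ ij ∈ S', (∑ B : T ij.1, w ij.1 ij.2 (v ij.1) B) / Di ij.1 (v ij.1)) ≤
              ∑ ij ∈ S, (∑ B : T ij.1, w ij.1 ij.2 (v ij.1) B) / Di ij.1 (v ij.1))) := by
  have hP : 0 < ∏ i', Di i' (v i') := Finset.prod_pos fun i _ => hv i
  have key : ∀ (i : Fin m) (j : Fin n),
      (∑ B : T i, w i j (v i) B * ∏ i' ∈ univ.erase i, Di i' (v i')) =
        (∏ i', Di i' (v i')) * ((∑ B : T i, w i j (v i) B) / Di i (v i)) := by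
    intro i j
    have hprod : (∏ i', Di i' (v i')) = Di i (v i) * ∏ i' ∈ univ.erase i, Di i' (v i') :=
      (Finset.mul_prod_erase univ (fun i' => Di i' (v i')) (mem_univ i)).symm
    rw [← Finset.sum_mul, hprod]
    rw [mul_comm (Di i (v i)), mul_assoc, mul_div_cancel₀ _ (hv i).ne', mul_comm]
  refine ⟨key, fun S _ => ?_⟩
  have hsum : ∀ S' : Finset (Fin m × Fin n),
      (∑ ij ∈ S', ∑ B : T ij.1, w ij.1 ij.2 (v ij.1) B *
          ∏ i' ∈ univ.erase ij.1, Di i' (v i')) =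
        (∏ i', Di i' (v i')) *
          ∑ ij ∈ S', (∑ B : T ij.1, w ij.1 ij.2 (v ij.1) B) / Di ij.1 (v ij.1) := by
    intro S'
    rw [Finset.mul_sum]
    exact Finset.sum_congr rfl fun ij _ => key ij.1 ij.2
  constructor <;> intro h S' hS' <;> have := h S' hS'
  · rw [hsum, hsum] at this
    exact le_of_mul_le_mul_left this hP
  · rw [hsum, hsum]
    exact mul_le_mul_of_nonneg_left this hP.le
end
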